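/- Fix nonnegative integers x'_1,…,x'_k, y'_1,…,y'_k with n' := x'_1 + ⋯ + x'_k = y'_1 + ⋯ + y'_k. Define H(x'_1,…,x'_k; y'_1,…,y'_k) = x'_1 y'_1 / n' if n' ≠ 0 and H = 0 if n' = 0. Then for nonnegative integers c_1,…,c_k with c_i ≤ min(x'_i, y'_i) for each i, the function G(c_1,…,c_k) := H(x'_1 − c_1,…,x'_k − c_k; y'_1 − c_1,…,y'_k − c_k) + c_1 is monotone nondecreasing in each coordinate c_i. -/

import Mathlib

lemma key_ineq (a b d n : ℝ) (hd : 0 ≤ d)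
    (han : a ≤ n) (hbn : b ≤ n) (hn : 0 < n) (hnd : 0 < n - d) :
    a * b / n ≤ (a - d) * (b - d) / (n - d) + d := by
  rw [div_add' _ _ _ (ne_of_gt hnd), div_le_div_iff₀ hn hnd]
  nlinarith [mul_nonneg (mul_nonneg hd (sub_nonneg.2 han)) (sub_nonneg.2 hbn)]

theorem encounter_mating_H_monotone
    (k : ℕ) (hk : 1 ≤ k) (x y : Fin k → ℕ)
    (hsum : ∑ i, x i = ∑ i, y i)
    (G : (Fin k → ℕ) → ℝ)
    (hG : ∀ c : Fin k → ℕ, G c =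
      (if (∑ i, (x i - c i)) = 0 then (0 : ℝ)
       else ((x ⟨0, hk⟩ - c ⟨0, hk⟩ : ℕ) : ℝ) * ((y ⟨0, hk⟩ - c ⟨0, hk⟩ : ℕ) : ℝ) /
         ((∑ i, (x i - c i) : ℕ) : ℝ)) + (c ⟨0, hk⟩ : ℝ)) :
    ∀ (c : Fin k → ℕ) (i : Fin k) (m : ℕ),
      (∀ j, c j ≤ min (x j) (y j)) → c i ≤ m → m ≤ min (x i) (y i) →
      G c ≤ G (Function.update c i m) := by
  intro c i m hc hcm hm
  set z : Fin k := ⟨0, hk⟩ with hz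
  have hcx : ∀ j, c j ≤ x j := fun j => (hc j).trans (min_le_left _ _)
  have hcy : ∀ j, c j ≤ y j := fun j => (hc j).trans (min_le_right _ _)
  set c' := Function.update c i m with hc'def
  have hcc' : ∀ j, c j ≤ c' j := by
    intro j
    rcases eq_or_ne j i with rfl | h
    · simpa [hc'def] using hcm
    · simp [hc'def, Function.update_of_ne h]
  have hc'x : ∀ j, c' j ≤ x j := by
    intro j
    rcases eq_or_ne j i with rfl | h
    · simpa [hc'def] using hm.trans (min_le_left _ _)
    · simpa [hc'def, Function.update_of_ne h] using hcx j
  have hc'y : ∀ j, c' j ≤ y j := by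
    intro j
    rcases eq_or_ne j i with rfl | h
    · simpa [hc'def] using hm.trans (min_le_right _ _)
    · simpa [hc'def, Function.update_of_ne h] using hcy j
  -- sums
  set S := ∑ j, (x j - c j) with hS
  set S' := ∑ j, (x j - c' j) with hS'
  have hSy : S = ∑ j, (y j - c j) := by
    have h1 : ∑ j, (x j - c j) = ∑ j, x j - ∑ j, c j :=
      Finset.sum_tsub_distrib Finset.univ (fun j _ => hcx j)
    have h2 : ∑ j, (y j - c j) = ∑ j, y j - ∑ j, c j :=
      Finset.sum_tsub_distrib Finset.univ (fun j _ => hcy j)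
    rw [hS, h1, h2, hsum]
  have hS'S : S' ≤ S := by
    apply Finset.sum_le_sum
    intro j _
    exact Nat.sub_le_sub_left (hcc' j) _
  have hxS : x z - c z ≤ S := by
    rw [hS]; exact Finset.single_le_sum (f := fun j => x j - c j) (fun j _ => Nat.zero_le _) (Finset.mem_univ z)
  have hyS : y z - c z ≤ S := by
    rw [hSy]; exact Finset.single_le_sum (f := fun j => y j - c j) (fun j _ => Nat.zero_le _) (Finset.mem_univ z)
  rw [hG c, hG c']
  rw [show (∑ j, (x j - c j)) = S from rfl, show (∑ j, (x j - c' j)) = S' from rfl]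
  rcases eq_or_ne i z with rfl | hiz
  · -- updating coordinate 0
    have hczi : c' z = m := by simp [hc'def]
    have hmx : m ≤ x z := hm.trans (min_le_left _ _)
    have hmy : m ≤ y z := hm.trans (min_le_right _ _)
    have hS'eq : S' = S - (m - c z) := by
      have hterm : ∀ j, x j - c' j = (x j - c j) - (if j = z then m - c z else 0) := by
        intro j
        rcases eq_or_ne j z with rfl | h
        · simp [hczi]; omega
        · simp [h, hc'def, Function.update_of_ne h]
      rw [hS', hS]
      calc ∑ j, (x j - c' j) = ∑ j, ((x j - c j) - (if j = z then m - c z else 0)) :=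
            Finset.sum_congr rfl (fun j _ => hterm j)
        _ = ∑ j, (x j - c j) - ∑ j, (if j = z then m - c z else 0) := by
            apply Finset.sum_tsub_distrib
            intro j _
            rcases eq_or_ne j z with rfl | h
            · simp; omega
            · simp [h]
        _ = ∑ j, (x j - c j) - (m - c z) := by
            rw [Finset.sum_ite_eq' Finset.univ z]
            simp
    have hdS : m - c z ≤ S := le_trans (by omega) hxS
    by_cases hS0 : S = 0
    · have hS'0 : S' = 0 := by omega
      rw [if_pos hS0, if_pos hS'0]
      simpa [hczi] using hcm
    · by_cases hS'0 : S' = 0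
      · have hm' : m = c z + S := by omega
        rw [if_neg hS0, if_pos hS'0, hczi, hm']
        have hSpos : (0:ℝ) < (S:ℝ) := by exact_mod_cast Nat.pos_of_ne_zero hS0
        have h1 : ((x z - c z : ℕ):ℝ) ≤ (S:ℝ) := by exact_mod_cast hxS
        have h2 : ((y z - c z : ℕ):ℝ) ≤ (S:ℝ) := by exact_mod_cast hyS
        have h3 : ((x z - c z : ℕ):ℝ) * ((y z - c z : ℕ):ℝ) / S ≤ (S:ℝ) := by
          rw [div_le_iff₀ hSpos]
          nlinarith [(Nat.cast_nonneg (x z - c z) : (0:ℝ) ≤ ((x z - c z : ℕ):ℝ)), (Nat.cast_nonneg (y z - c z) : (0:ℝ) ≤ ((y z - c z : ℕ):ℝ))]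
        push_cast
        linarith
      · rw [if_neg hS0, if_neg hS'0, hczi]
        have e1 : ((x z - m : ℕ):ℝ) = ((x z - c z : ℕ):ℝ) - ((m - c z : ℕ):ℝ) := by
          rw [show x z - m = (x z - c z) - (m - c z) by omega, Nat.cast_sub (by omega)]
        have e2 : ((y z - m : ℕ):ℝ) = ((y z - c z : ℕ):ℝ) - ((m - c z : ℕ):ℝ) := by
          rw [show y z - m = (y z - c z) - (m - c z) by omega, Nat.cast_sub (by omega)]
        have e3 : ((S' : ℕ):ℝ) = (S:ℝ) - ((m - c z : ℕ):ℝ) := by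
          rw [hS'eq, Nat.cast_sub hdS]
        have e4 : (m:ℝ) = ((m - c z : ℕ):ℝ) + (c z : ℝ) := by
          rw [Nat.cast_sub hcm]; ring
        rw [e1, e2, e3, e4]
        have key := key_ineq ((x z - c z : ℕ):ℝ) ((y z - c z : ℕ):ℝ)
          ((m - c z : ℕ):ℝ) (S:ℝ) (Nat.cast_nonneg _)
          (by exact_mod_cast hxS) (by exact_mod_cast hyS)
          (by exact_mod_cast Nat.pos_of_ne_zero hS0)
          (by rw [← e3]; exact_mod_cast Nat.pos_of_ne_zero hS'0)
        linarith
  · -- updating another coordinate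
    have hczz : c' z = c z := by simp [hc'def, Function.update_of_ne (Ne.symm hiz)]
    rw [hczz]
    have main : (if S = 0 then (0:ℝ) else ((x z - c z : ℕ):ℝ) * ((y z - c z : ℕ):ℝ) / S)
        ≤ (if S' = 0 then (0:ℝ) else ((x z - c z : ℕ):ℝ) * ((y z - c z : ℕ):ℝ) / S') := by
      by_cases hS'0 : S' = 0
      · rw [if_pos hS'0]
        by_cases hS0 : S = 0
        · rw [if_pos hS0]
        · rw [if_neg hS0]
          have hx0 : x z - c' z = 0 :=
            (Finset.sum_eq_zero_iff.mp hS'0) z (Finset.mem_univ z)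
          rw [hczz] at hx0
          rw [hx0]
          simp
      · have hS0 : S ≠ 0 := by omega
        rw [if_neg hS0, if_neg hS'0]
        apply div_le_div_of_nonneg_left _ _ (by exact_mod_cast hS'S)
        · positivity
        · exact_mod_cast Nat.pos_of_ne_zero hS'0
    linarith
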